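/- arXiv:2602.08496 — 5 statements merged into one kernel-verified Lean document; each statement's English description precedes it below -/
import Mathlib

section
/- Let u₀ : ℝ → ℝ be a bounded Lebesgue-measurable function, and fix x > 0 and t > 0. Define I₁^ε(x,t) = (1/(2√(π ε t))) ∫₀^∞ exp( −(1/(2ε)) [ (x−ξ)²/(2t) + ∫₀^ξ u₀(z) dz ] ) dξ for ε > 0. Then lim_{ε → 0⁺} [ −2ε · log I₁^ε(x,t) ] = min_{ξ ≥ 0} [ (x−ξ)²/(2t) + ∫₀^ξ u₀(z) dz ], and this minimum is attained. -/
open MeasureTheory Filter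

/-- Integrability of `exp(-c·F)` on `(0,∞)` for continuous `F` with quadratic growth. -/
lemma aux_integrable (F : ℝ → ℝ) (hF : Continuous F) (t C₀ : ℝ) (ht : 0 < t)
    (hgrow : ∀ ξ ∈ Set.Ioi (0:ℝ), ξ^2/(8*t) - C₀ ≤ F ξ) (c : ℝ) (hc : 0 < c) :
    IntegrableOn (fun ξ => Real.exp (-c * F ξ)) (Set.Ioi (0:ℝ)) := by
  have hb : 0 < c / (8 * t) := by positivity
  have hg : Integrable (fun ξ : ℝ => Real.exp (c * C₀) * Real.exp (-(c/(8*t)) * ξ^2)) := by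
    exact (integrable_exp_neg_mul_sq hb).const_mul _
  refine Integrable.mono' hg.integrableOn
    ((continuous_const.mul hF).rexp.aestronglyMeasurable) ?_
  rw [ae_restrict_iff' measurableSet_Ioi]
  refine Filter.Eventually.of_forall (fun ξ hξ => ?_)
  rw [Real.norm_eq_abs, abs_of_pos (Real.exp_pos _), ← Real.exp_add]
  apply Real.exp_le_exp.2
  have h1 := hgrow ξ hξ
  have h2 : c * (ξ^2/(8*t) - C₀) ≤ c * F ξ := mul_le_mul_of_nonneg_left h1 hc.le
  have h3 : c * (ξ^2/(8*t)) = c/(8*t) * ξ^2 := by ring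
  nlinarith

/-- Lower bound for the Laplace-type integral via an interval where `F ≤ B`. -/
lemma aux_lower (F : ℝ → ℝ) (hF : Continuous F) (t C₀ : ℝ) (ht : 0 < t)
    (hgrow : ∀ ξ ∈ Set.Ioi (0:ℝ), ξ^2/(8*t) - C₀ ≤ F ξ)
    (a b B : ℝ) (ha : 0 < a) (hab : a < b) (hB : ∀ ξ ∈ Set.Icc a b, F ξ ≤ B)
    (c : ℝ) (hc : 0 < c) :
    (b - a) * Real.exp (-c * B) ≤ ∫ ξ in Set.Ioi (0:ℝ), Real.exp (-c * F ξ) := by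
  have hsub : Set.Icc a b ⊆ Set.Ioi (0:ℝ) := fun ξ hξ => lt_of_lt_of_le ha hξ.1
  have hint := aux_integrable F hF t C₀ ht hgrow c hc
  have h1 : ∫ ξ in Set.Icc a b, Real.exp (-c * F ξ)
      ≤ ∫ ξ in Set.Ioi (0:ℝ), Real.exp (-c * F ξ) :=
    setIntegral_mono_set hint
      (Filter.Eventually.of_forall fun ξ => (Real.exp_pos _).le) hsub.eventuallyLE
  have h2 : Real.exp (-c * B) * (volume (Set.Icc a b)).toReal
      ≤ ∫ ξ in Set.Icc a b, Real.exp (-c * F ξ) := by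
    refine setIntegral_ge_of_const_le_real measurableSet_Icc measure_Icc_lt_top.ne
      (fun ξ hξ => Real.exp_le_exp.2 ?_) (hint.mono_set hsub)
    have := hB ξ hξ
    nlinarith
  rw [Real.volume_Icc, ENNReal.toReal_ofReal (by linarith)] at h2
  calc (b - a) * Real.exp (-c * B) = Real.exp (-c * B) * (b - a) := by ring
    _ ≤ _ := h2
  |>.trans h1

/-- **Vanishing-viscosity limit of `I₁^ε` (the `U_R³` component of Theorem 3.1).**
For bounded measurable `u₀`, `x > 0`, `t > 0`, the function
`ξ ↦ (x-ξ)²/(2t) + ∫₀^ξ u₀` attains its minimum over `[0,∞)` at some `ξ₀`, and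
`-2ε log I₁^ε(x,t) → (x-ξ₀)²/(2t) + ∫₀^{ξ₀} u₀` as `ε → 0⁺`, where
`I₁^ε(x,t) = (1/(2√(πεt))) ∫₀^∞ exp(-(1/2ε)[(x-ξ)²/(2t) + ∫₀^ξ u₀]) dξ`. -/
theorem limit_I1 (u₀ : ℝ → ℝ) (hmeas : Measurable u₀) (M : ℝ) (hbdd : ∀ y : ℝ, |u₀ y| ≤ M)
    (x t : ℝ) (hx : 0 < x) (ht : 0 < t) :
    ∃ ξ₀ ∈ Set.Ici (0 : ℝ),
      (∀ ξ ∈ Set.Ici (0 : ℝ),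
        (x - ξ₀) ^ 2 / (2 * t) + (∫ z in (0 : ℝ)..ξ₀, u₀ z)
          ≤ (x - ξ) ^ 2 / (2 * t) + ∫ z in (0 : ℝ)..ξ, u₀ z) ∧
      Tendsto (fun ε : ℝ =>
          -2 * ε * Real.log ((1 / (2 * Real.sqrt (Real.pi * ε * t))) *
            ∫ ξ in Set.Ioi (0 : ℝ),
              Real.exp (-(1 / (2 * ε)) * ((x - ξ) ^ 2 / (2 * t) + ∫ z in (0 : ℝ)..ξ, u₀ z))))
        (nhdsWithin 0 (Set.Ioi 0))
        (nhds ((x - ξ₀) ^ 2 / (2 * t) + ∫ z in (0 : ℝ)..ξ₀, u₀ z)) := by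
  have hM : 0 ≤ M := (abs_nonneg _).trans (hbdd 0)
  obtain ⟨F, hFeq⟩ : ∃ F : ℝ → ℝ,
      ∀ ξ, F ξ = (x - ξ) ^ 2 / (2 * t) + ∫ z in (0 : ℝ)..ξ, u₀ z := ⟨_, fun _ => rfl⟩
  simp only [← hFeq]
  -- interval integrability of u₀
  have hInt : ∀ a b : ℝ, IntervalIntegrable u₀ volume a b := by
    intro a b
    rw [intervalIntegrable_iff]
    exact Measure.integrableOn_of_bounded measure_Ioc_lt_top.ne
      hmeas.aestronglyMeasurable (Filter.Eventually.of_forall fun z => hbdd z)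
  -- continuity of F
  have hcont : Continuous F := by
    have : Continuous fun ξ : ℝ => (x - ξ) ^ 2 / (2 * t) + ∫ z in (0 : ℝ)..ξ, u₀ z := by
      apply Continuous.add
      · fun_prop
      · exact intervalIntegral.continuous_primitive hInt 0
    simpa only [← hFeq] using this
  -- primitive bound
  have hprim : ∀ ξ : ℝ, 0 ≤ ξ → |∫ z in (0 : ℝ)..ξ, u₀ z| ≤ M * ξ := by
    intro ξ hξ
    have h := intervalIntegral.norm_integral_le_of_norm_le_const
      (C := M) (f := u₀) (a := 0) (b := ξ) (fun z _ => by simpa using hbdd z)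
    simpa [abs_of_nonneg hξ] using h
  -- growth bound
  obtain ⟨C₀, hC₀def, hC₀⟩ : ∃ c : ℝ, c = x ^ 2 / (2 * t) + 2 * t * M ^ 2 ∧ 0 ≤ c :=
    ⟨_, rfl, by positivity⟩
  have hgrow : ∀ ξ ∈ Set.Ioi (0:ℝ), ξ ^ 2 / (8 * t) - C₀ ≤ F ξ := by
    intro ξ hξ
    have hξ0 : (0:ℝ) ≤ ξ := le_of_lt hξ
    have h1 := hprim ξ hξ0
    have h2 : -(M * ξ) ≤ ∫ z in (0 : ℝ)..ξ, u₀ z := (abs_le.mp h1).1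
    have key : (x - ξ) ^ 2 / (2 * t) - M * ξ - (ξ ^ 2 / (8 * t) - C₀)
        = ((ξ - 4 * t * M) ^ 2 + 2 * (ξ - 2 * x) ^ 2) / (8 * t) := by
      rw [hC₀def]; field_simp; ring
    have hpos : 0 ≤ ((ξ - 4 * t * M) ^ 2 + 2 * (ξ - 2 * x) ^ 2) / (8 * t) := by positivity
    rw [hFeq]
    linarith
  -- existence of the minimizer
  obtain ⟨R, hRsq, hR0⟩ : ∃ R : ℝ, R ^ 2 = 8 * t * (C₀ + |F 0|) ∧ 0 ≤ R :=
    ⟨Real.sqrt _, Real.sq_sqrt (by positivity), Real.sqrt_nonneg _⟩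
  obtain ⟨ξ₀, hξ₀mem, hξ₀min⟩ :=
    isCompact_Icc.exists_isMinOn (Set.nonempty_Icc.2 hR0) hcont.continuousOn
  have hmin : ∀ ξ ∈ Set.Ici (0:ℝ), F ξ₀ ≤ F ξ := by
    intro ξ hξ
    by_cases hle : ξ ≤ R
    · exact hξ₀min ⟨hξ, hle⟩
    · push_neg at hle
      have hF0 : F ξ₀ ≤ F 0 := hξ₀min ⟨le_refl 0, hR0⟩
      have hξpos : ξ ∈ Set.Ioi (0:ℝ) := lt_of_le_of_lt hR0 hle
      have hg := hgrow ξ hξpos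
      have hsq : R ^ 2 ≤ ξ ^ 2 := by nlinarith
      have h8t : (0:ℝ) < 8 * t := by positivity
      have hdiv : C₀ + |F 0| ≤ ξ ^ 2 / (8 * t) := by
        rw [le_div_iff₀ h8t]; nlinarith
      have habs := le_abs_self (F 0)
      linarith
  refine ⟨ξ₀, hξ₀mem.1, hmin, ?_⟩
  -- abbreviate the integral
  obtain ⟨I, hIeq⟩ : ∃ I : ℝ → ℝ,
      ∀ ε, I ε = ∫ ξ in Set.Ioi (0:ℝ), Real.exp (-(1 / (2 * ε)) * F ξ) := ⟨_, fun _ => rfl⟩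
  simp only [← hIeq]
  -- small intervals where F is close to its minimum
  have hball : ∀ δ : ℝ, 0 < δ → ∃ a b : ℝ, 0 < a ∧ a < b ∧
      ∀ ξ ∈ Set.Icc a b, F ξ ≤ F ξ₀ + δ := by
    intro δ hδ
    obtain ⟨η, hη, hcl⟩ := Metric.continuousAt_iff.mp hcont.continuousAt δ hδ
    have hξ₀0 : 0 ≤ ξ₀ := hξ₀mem.1
    refine ⟨ξ₀ + η/3, ξ₀ + 2*η/3, by linarith, by linarith, ?_⟩
    intro ξ hξ
    have hd : dist ξ ξ₀ < η := by
      rw [Real.dist_eq]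
      exact abs_lt.2 ⟨by linarith [hξ.1], by linarith [hξ.2]⟩
    have h2 := hcl hd
    rw [Real.dist_eq] at h2
    linarith [(abs_lt.mp h2).2]
  -- positivity of the integral
  have hIlow : ∀ a b B : ℝ, 0 < a → a < b → (∀ ξ ∈ Set.Icc a b, F ξ ≤ B) →
      ∀ ε : ℝ, 0 < ε → (b - a) * Real.exp (-(1/(2*ε)) * B) ≤ I ε := by
    intro a b B ha hab hB ε hε
    rw [hIeq]
    exact aux_lower F hcont t C₀ ht hgrow a b B ha hab hB (1/(2*ε)) (by positivity)
  obtain ⟨a₁, b₁, ha₁, hab₁, hB₁⟩ := hball 1 one_pos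
  have hIpos : ∀ ε : ℝ, 0 < ε → 0 < I ε := by
    intro ε hε
    have := hIlow a₁ b₁ (F ξ₀ + 1) ha₁ hab₁ hB₁ ε hε
    have h0 : 0 < (b₁ - a₁) * Real.exp (-(1/(2*ε)) * (F ξ₀ + 1)) :=
      mul_pos (by linarith) (Real.exp_pos _)
    linarith
  -- the comparison integral K
  obtain ⟨K, hKeq⟩ : ∃ K : ℝ,
      K = ∫ ξ in Set.Ioi (0:ℝ), Real.exp (-(1/2 : ℝ) * F ξ) := ⟨_, rfl⟩
  have hKpos : 0 < K := by
    have hl := aux_lower F hcont t C₀ ht hgrow a₁ b₁ (F ξ₀ + 1) ha₁ hab₁ hB₁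
      (1/2 : ℝ) one_half_pos
    have h0 : 0 < (b₁ - a₁) * Real.exp (-(1/2 : ℝ) * (F ξ₀ + 1)) :=
      mul_pos (by linarith) (Real.exp_pos _)
    rw [hKeq]; linarith
  -- upper bound on I for small ε
  have hIup : ∀ ε : ℝ, 0 < ε → ε ≤ 1 →
      I ε ≤ Real.exp (-(1/(2*ε)) * F ξ₀ + F ξ₀ / 2) * K := by
    intro ε hε0 hε1
    rw [hIeq, hKeq, ← integral_const_mul]
    have hc2 : (1:ℝ)/2 ≤ 1/(2*ε) :=
      one_div_le_one_div_of_le (by linarith) (by linarith)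
    refine setIntegral_mono_on (aux_integrable F hcont t C₀ ht hgrow _ (by positivity))
      ((aux_integrable F hcont t C₀ ht hgrow (1/2 : ℝ) one_half_pos).const_mul _)
      measurableSet_Ioi (fun ξ hξ => ?_)
    rw [← Real.exp_add]
    apply Real.exp_le_exp.2
    have hmξ : F ξ₀ ≤ F ξ := hmin ξ (show (0:ℝ) ≤ ξ from le_of_lt hξ)
    nlinarith [mul_nonneg (sub_nonneg.2 hc2) (sub_nonneg.2 hmξ)]
  -- the prefactor error term
  obtain ⟨L, hLeq⟩ : ∃ L : ℝ → ℝ,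
      ∀ ε, L ε = -2 * ε * Real.log (1 / (2 * Real.sqrt (Real.pi * ε * t))) :=
    ⟨_, fun _ => rfl⟩
  have hL : Tendsto L (nhdsWithin 0 (Set.Ioi 0)) (nhds 0) := by
    have hψ : Tendsto (fun ε : ℝ =>
        ε * (2*Real.log 2 + Real.log Real.pi + Real.log t) + ε * Real.log ε)
        (nhds 0) (nhds 0) := by
      have h1 : Tendsto (fun ε : ℝ => ε * Real.log ε) (nhds 0) (nhds 0) := by
        simpa using Real.continuous_mul_log.tendsto 0
      have h2 : Tendsto (fun ε : ℝ =>
          ε * (2*Real.log 2 + Real.log Real.pi + Real.log t)) (nhds 0) (nhds 0) := by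
        have h := (tendsto_id (x := nhds (0:ℝ))).mul_const (2*Real.log 2 + Real.log Real.pi + Real.log t)
        rw [zero_mul] at h; exact h
      simpa using h2.add h1
    refine (hψ.mono_left nhdsWithin_le_nhds).congr'
      (Filter.eventuallyEq_of_mem self_mem_nhdsWithin fun ε hε => ?_) 
    have hε : (0:ℝ) < ε := hε
    have hπt : (0:ℝ) < Real.pi * t := by positivity
    have hs : Real.sqrt (Real.pi * ε * t) > 0 := Real.sqrt_pos.2 (by positivity)
    rw [hLeq, one_div, Real.log_inv, Real.log_mul two_ne_zero (ne_of_gt hs),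
      Real.log_sqrt (by positivity), Real.log_mul (by positivity) (ne_of_gt ht),
      Real.log_mul (ne_of_gt Real.pi_pos) (ne_of_gt hε)]
    ring
  -- split the logarithm
  have hsplit : (fun ε : ℝ => -2 * ε * Real.log ((1 / (2 * Real.sqrt (Real.pi * ε * t))) * I ε))
      =ᶠ[nhdsWithin 0 (Set.Ioi 0)]
      (fun ε : ℝ => L ε + -2 * ε * Real.log (I ε)) := by
    refine Filter.eventuallyEq_of_mem self_mem_nhdsWithin fun ε hε => ?_
    have hε : (0:ℝ) < ε := hε
    have hc : (0:ℝ) < 1 / (2 * Real.sqrt (Real.pi * ε * t)) := by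
      have : Real.sqrt (Real.pi * ε * t) > 0 := Real.sqrt_pos.2 (by positivity)
      positivity
    rw [Real.log_mul (ne_of_gt hc) (ne_of_gt (hIpos ε hε)), hLeq]
    ring
  rw [Filter.tendsto_congr' hsplit]
  -- the main squeeze
  refine tendsto_order.2 ⟨?_, ?_⟩
  · -- lower bound
    intro b hb
    have herr : Tendsto (fun ε : ℝ => L ε + (-(ε * F ξ₀) - 2 * ε * Real.log K))
        (nhdsWithin 0 (Set.Ioi 0)) (nhds 0) := by
      have h2 : Tendsto (fun ε : ℝ => -(ε * F ξ₀) - 2 * ε * Real.log K)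
          (nhds 0) (nhds 0) := by
        have : Continuous fun ε : ℝ => -(ε * F ξ₀) - 2 * ε * Real.log K := by fun_prop
        simpa using this.tendsto 0
      simpa using hL.add (h2.mono_left nhdsWithin_le_nhds)
    have hev := herr.eventually (eventually_gt_nhds (show b - F ξ₀ < 0 by linarith))
    filter_upwards [hev, Ioo_mem_nhdsGT (show (0:ℝ) < 1 from one_pos)]
      with ε herr' hε
    obtain ⟨hε0, hε1⟩ := hε
    have hIu := hIup ε hε0 (le_of_lt hε1)
    have hIp := hIpos ε hε0
    have hlog : Real.log (I ε) ≤ (-(1/(2*ε)) * F ξ₀ + F ξ₀ / 2) + Real.log K := by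
      have h := Real.log_le_log hIp hIu
      rwa [Real.log_mul (Real.exp_ne_zero _) (ne_of_gt hKpos), Real.log_exp] at h
    have h3 := mul_le_mul_of_nonneg_left hlog (show (0:ℝ) ≤ 2*ε by linarith)
    have hid : 2 * ε * (-(1/(2*ε)) * F ξ₀) = -(F ξ₀) := by field_simp
    nlinarith [herr']
  · -- upper bound
    intro b hb
    obtain ⟨a', b', ha', hab', hB'⟩ := hball ((b - F ξ₀)/2) (by linarith)
    have herr : Tendsto (fun ε : ℝ => L ε - 2 * ε * Real.log (b' - a'))
        (nhdsWithin 0 (Set.Ioi 0)) (nhds 0) := by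
      have h2 : Tendsto (fun ε : ℝ => -(2 * ε * Real.log (b' - a')))
          (nhds 0) (nhds 0) := by
        have : Continuous fun ε : ℝ => -(2 * ε * Real.log (b' - a')) := by fun_prop
        simpa using this.tendsto 0
      simpa [sub_eq_add_neg] using hL.add (h2.mono_left nhdsWithin_le_nhds)
    have hev := herr.eventually (eventually_lt_nhds (show (0:ℝ) < (b - F ξ₀)/2 by linarith))
    filter_upwards [hev, self_mem_nhdsWithin] with ε herr' hε
    have hε0 : (0:ℝ) < ε := hε
    have hlow := hIlow a' b' (F ξ₀ + (b - F ξ₀)/2) ha' hab' hB' ε hε0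
    have hIp := hIpos ε hε0
    have hlog : Real.log (b' - a') + (-(1/(2*ε)) * (F ξ₀ + (b - F ξ₀)/2))
        ≤ Real.log (I ε) := by
      have h0 : (0:ℝ) < (b' - a') * Real.exp (-(1/(2*ε)) * (F ξ₀ + (b - F ξ₀)/2)) := by
        have : 0 < b' - a' := by linarith
        positivity
      have h := Real.log_le_log h0 hlow
      rwa [Real.log_mul (by linarith : b' - a' ≠ 0) (Real.exp_ne_zero _), Real.log_exp] at h
    have h3 := mul_le_mul_of_nonneg_left hlog (show (0:ℝ) ≤ 2*ε by linarith)
    have hid : 2 * ε * (-(1/(2*ε)) * (F ξ₀ + (b - F ξ₀)/2))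
        = -(F ξ₀ + (b - F ξ₀)/2) := by field_simp
    nlinarith [herr']
end

section
/- Let u₀ : ℝ → ℝ be a bounded Lebesgue-measurable function, and fix x < 0 and t > 0. Define J₂^ε(x,t) = (1/(2√(π ε t))) ∫₀^∞ exp( −(1/(2ε)) [ (x+ξ)²/(2t) + ∫₀^{−ξ} u₀(z) dz ] ) dξ for ε > 0. Then lim_{ε → 0⁺} [ −2ε · log J₂^ε(x,t) ] = min_{ξ ≥ 0} [ (x+ξ)²/(2t) + ∫₀^{−ξ} u₀(z) dz ], and this minimum is attained. -/
open MeasureTheory Filter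
set_option maxHeartbeats 1000000

private lemma integrableOn_exp_neg_mul_F {F : ℝ → ℝ} (hF : Continuous F) {a β : ℝ} (ha : 0 < a)
    (hgrow : ∀ ξ, 0 ≤ ξ → a * ξ ^ 2 - β ≤ F ξ) {c : ℝ} (hc : 0 < c) :
    IntegrableOn (fun ξ => Real.exp (-c * F ξ)) (Set.Ioi (0:ℝ)) := by
  have hg : Integrable (fun ξ : ℝ => Real.exp (c * β) * Real.exp (-(c * a) * ξ ^ 2)) volume :=
    (integrable_exp_neg_mul_sq (by positivity)).const_mul _
  have hcont : Continuous (fun ξ => Real.exp (-c * F ξ)) := ((continuous_const.mul hF)).rexp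
  refine Integrable.mono' hg.restrict (hcont.aestronglyMeasurable).restrict ?_
  rw [ae_restrict_iff' measurableSet_Ioi]
  refine ae_of_all _ fun ξ hξ => ?_
  rw [Real.norm_eq_abs, abs_of_pos (Real.exp_pos _), ← Real.exp_add]
  refine Real.exp_le_exp.2 ?_
  have h1 := hgrow ξ (le_of_lt hξ)
  nlinarith [mul_le_mul_of_nonneg_left h1 hc.le]

private lemma laplace_main {F : ℝ → ℝ} (hF : Continuous F) {a β : ℝ} (ha : 0 < a)
    (hgrow : ∀ ξ, 0 ≤ ξ → a * ξ ^ 2 - β ≤ F ξ)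
    {ξ₀ : ℝ} (hξ₀ : 0 ≤ ξ₀) (hmin : ∀ ξ, 0 ≤ ξ → F ξ₀ ≤ F ξ) :
    (∀ ε : ℝ, 0 < ε → 0 < ∫ ξ in Set.Ioi (0:ℝ), Real.exp (-(1/(2*ε)) * F ξ)) ∧
    Tendsto (fun ε : ℝ => -2 * ε * Real.log (∫ ξ in Set.Ioi (0:ℝ), Real.exp (-(1/(2*ε)) * F ξ)))
      (nhdsWithin 0 (Set.Ioi 0)) (nhds (F ξ₀)) := by
  set m := F ξ₀ with hm
  have hInt : ∀ c : ℝ, 0 < c → IntegrableOn (fun ξ => Real.exp (-c * F ξ)) (Set.Ioi (0:ℝ)) :=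
    fun c hc => integrableOn_exp_neg_mul_F hF ha hgrow hc
  have hIntε : ∀ ε : ℝ, 0 < ε →
      IntegrableOn (fun ξ => Real.exp (-(1/(2*ε)) * F ξ)) (Set.Ioi (0:ℝ)) :=
    fun ε hε => hInt _ (by positivity)
  have hsupp : ∀ (g : ℝ → ℝ), (∀ ξ, 0 < g ξ) → IntegrableOn g (Set.Ioi (0:ℝ)) →
      0 < ∫ ξ in Set.Ioi (0:ℝ), g ξ := by
    intro g hg hgi
    rw [setIntegral_pos_iff_support_of_nonneg_ae (ae_of_all _ fun ξ => (hg ξ).le) hgi]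
    have : Function.support g = Set.univ := by
      ext ξ; simp [Function.mem_support, (hg ξ).ne']
    rw [this, Set.univ_inter, Real.volume_Ioi]
    exact ENNReal.zero_lt_top
  have hpos : ∀ ε : ℝ, 0 < ε → 0 < ∫ ξ in Set.Ioi (0:ℝ), Real.exp (-(1/(2*ε)) * F ξ) :=
    fun ε hε => hsupp _ (fun ξ => Real.exp_pos _) (hIntε ε hε)
  -- the constant C
  set C := ∫ ξ in Set.Ioi (0:ℝ), Real.exp (-(F ξ - m)) with hC
  have hCint : IntegrableOn (fun ξ => Real.exp (-(F ξ - m))) (Set.Ioi (0:ℝ)) := by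
    have h1 : IntegrableOn (fun ξ => Real.exp m * Real.exp (-1 * F ξ)) (Set.Ioi (0:ℝ)) :=
      (hInt 1 one_pos).const_mul _
    exact h1.congr_fun (fun ξ _ => by dsimp only; rw [← Real.exp_add]; congr 1; ring) measurableSet_Ioi
  have hCpos : 0 < C := hsupp _ (fun ξ => Real.exp_pos _) hCint
  -- upper bound
  have hub : ∀ ε : ℝ, 0 < ε → ε ≤ 1/2 →
      (∫ ξ in Set.Ioi (0:ℝ), Real.exp (-(1/(2*ε)) * F ξ)) ≤ Real.exp (-(m/(2*ε))) * C := by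
    intro ε hε hε2
    have h2ε : 1 ≤ 1/(2*ε) := by rw [le_div_iff₀ (by positivity)]; linarith
    have step : (∫ ξ in Set.Ioi (0:ℝ), Real.exp (-(1/(2*ε)) * F ξ))
        ≤ ∫ ξ in Set.Ioi (0:ℝ), Real.exp (-(m/(2*ε))) * Real.exp (-(F ξ - m)) := by
      refine setIntegral_mono_on (hIntε ε hε) (hCint.const_mul _) measurableSet_Ioi
        fun ξ hξ => ?_
      rw [← Real.exp_add]
      refine Real.exp_le_exp.2 ?_
      have hFm : m ≤ F ξ := hmin ξ (le_of_lt hξ)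
      have hle : (F ξ - m) * 1 ≤ (F ξ - m) * (1/(2*ε)) :=
        mul_le_mul_of_nonneg_left h2ε (by linarith)
      have hms : m/(2*ε) = m * (1/(2*ε)) := by ring
      rw [hms]; nlinarith [hle]
    calc (∫ ξ in Set.Ioi (0:ℝ), Real.exp (-(1/(2*ε)) * F ξ))
        ≤ ∫ ξ in Set.Ioi (0:ℝ), Real.exp (-(m/(2*ε))) * Real.exp (-(F ξ - m)) := step
      _ = Real.exp (-(m/(2*ε))) * C := by rw [integral_const_mul]
  -- lower bound
  have hlb : ∀ η : ℝ, 0 < η → ∃ h : ℝ, 0 < h ∧ Real.log h ≤ 0 ∧ ∀ ε : ℝ, 0 < ε →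
      h * Real.exp (-((m + η)/(2*ε))) ≤ ∫ ξ in Set.Ioi (0:ℝ), Real.exp (-(1/(2*ε)) * F ξ) := by
    intro η hη
    obtain ⟨h, hh, hball⟩ := Metric.continuousAt_iff.1 (hF.continuousAt (x := ξ₀)) η hη
    set d := min h 1 / 2 with hd
    have hdpos : 0 < d := by
      have : 0 < min h 1 := lt_min hh one_pos
      positivity
    have hd1 : d ≤ 1 := by
      have := min_le_right h 1; rw [hd]; linarith
    refine ⟨d, hdpos, Real.log_nonpos hdpos.le hd1, fun ε hε => ?_⟩
    set s := Set.Ioc ξ₀ (ξ₀ + d) with hs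
    have hsub : s ⊆ Set.Ioi (0:ℝ) := fun ξ hξ => lt_of_le_of_lt hξ₀ hξ.1
    have hFs : ∀ ξ ∈ s, F ξ ≤ m + η := by
      intro ξ hξ
      have hdist : dist ξ ξ₀ < h := by
        rw [Real.dist_eq, abs_of_nonneg (by linarith [hξ.1.le] : (0:ℝ) ≤ ξ - ξ₀)]
        have h2 := hξ.2
        have h3 := min_le_left h 1
        have h4 : 0 < min h 1 := lt_min hh one_pos
        have h5 : ξ ≤ ξ₀ + min h 1 / 2 := h2
        linarith
      have := hball hdist
      rw [Real.dist_eq] at this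
      have := abs_lt.1 this
      linarith [this.1, this.2]
    have key1 : d * Real.exp (-((m+η)/(2*ε))) = ∫ _ξ in s, Real.exp (-((m+η)/(2*ε))) := by
      rw [setIntegral_const, hs, measureReal_def, Real.volume_Ioc, add_sub_cancel_left,
        ENNReal.toReal_ofReal hdpos.le, smul_eq_mul]
    have key2 : (∫ _ξ in s, Real.exp (-((m+η)/(2*ε))))
        ≤ ∫ ξ in s, Real.exp (-(1/(2*ε)) * F ξ) := by
      refine setIntegral_mono_on (by
          refine integrableOn_const ?_
          rw [hs, Real.volume_Ioc]; exact ENNReal.ofReal_lt_top.ne)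
        ((hIntε ε hε).mono_set hsub) measurableSet_Ioc fun ξ hξ => ?_
      refine Real.exp_le_exp.2 ?_
      have hF2 := hFs ξ hξ
      have he1 : -(1/(2*ε)) * F ξ = -(F ξ/(2*ε)) := by ring
      rw [he1]
      apply neg_le_neg
      gcongr
    have key3 : (∫ ξ in s, Real.exp (-(1/(2*ε)) * F ξ))
        ≤ ∫ ξ in Set.Ioi (0:ℝ), Real.exp (-(1/(2*ε)) * F ξ) :=
      setIntegral_mono_set (hIntε ε hε) (ae_of_all _ fun ξ => (Real.exp_pos _).le)
        (HasSubset.Subset.eventuallyLE hsub)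
    linarith [key1, key2, key3]
  refine ⟨hpos, ?_⟩
  rw [Metric.tendsto_nhds]
  intro δ hδ
  obtain ⟨h, hh, hlog_h, hlow⟩ := hlb (δ/2) (by positivity)
  set K := max |Real.log C| (max |Real.log h| 1) with hKdef
  have hK1 : (1:ℝ) ≤ K := le_max_of_le_right (le_max_right _ _)
  have hKpos : (0:ℝ) < K := lt_of_lt_of_le one_pos hK1
  have hlCK : |Real.log C| ≤ K := le_max_left _ _
  have hlhK : |Real.log h| ≤ K := le_max_of_le_right (le_max_left _ _)
  set ε₁ := min (1/2) (δ / (8 * K)) with hε₁def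
  have hε₁pos : 0 < ε₁ := lt_min (by norm_num) (by positivity)
  filter_upwards [Ioo_mem_nhdsGT_of_mem (Set.mem_Ico.2 ⟨le_rfl, hε₁pos⟩)] with ε hε
  obtain ⟨hε0, hεlt⟩ := hε
  have hεhalf : ε ≤ 1/2 := le_of_lt (lt_of_lt_of_le hεlt (min_le_left _ _))
  have hεK : ε < δ / (8*K) := lt_of_lt_of_le hεlt (min_le_right _ _)
  have heK : ε * K < δ/8 := by
    have := (mul_lt_mul_of_pos_right hεK hKpos)
    have he2 : δ / (8*K) * K = δ/8 := by field_simp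
    linarith
  set I := ∫ ξ in Set.Ioi (0:ℝ), Real.exp (-(1/(2*ε)) * F ξ) with hIdef
  have hIpos : 0 < I := hpos ε hε0
  have hup := hub ε hε0 hεhalf
  have hlogup : Real.log I ≤ -(m/(2*ε)) + Real.log C := by
    refine le_trans (Real.log_le_log hIpos hup) ?_
    rw [Real.log_mul (Real.exp_ne_zero _) (ne_of_gt hCpos), Real.log_exp]
  have hlogdown : Real.log h + (-((m + δ/2)/(2*ε))) ≤ Real.log I := by
    have h1 := hlow ε hε0
    have h2 : Real.log (h * Real.exp (-((m + δ/2)/(2*ε)))) ≤ Real.log I :=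
      Real.log_le_log (by positivity) h1
    rwa [Real.log_mul (ne_of_gt hh) (Real.exp_ne_zero _), Real.log_exp] at h2
  -- upper estimate on B := -2 ε log I
  have hBup : -2*ε*Real.log I ≤ m + δ/2 - 2*ε*Real.log h := by
    have h1 : -2*ε*Real.log I ≤ -2*ε*(Real.log h + (-((m + δ/2)/(2*ε)))) :=
      mul_le_mul_of_nonpos_left hlogdown (by linarith)
    have h2 : -2*ε*(Real.log h + (-((m + δ/2)/(2*ε)))) = (m + δ/2) - 2*ε*Real.log h := by
      field_simp
      ring
    linarith
  have hBdown : m - 2*ε*Real.log C ≤ -2*ε*Real.log I := by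
    have h1 : -2*ε*(-(m/(2*ε)) + Real.log C) ≤ -2*ε*Real.log I :=
      mul_le_mul_of_nonpos_left hlogup (by linarith)
    have h2 : -2*ε*(-(m/(2*ε)) + Real.log C) = m - 2*ε*Real.log C := by
      field_simp
      ring
    linarith
  rw [Real.dist_eq, abs_lt]
  have habs1 : Real.log C ≤ K := le_trans (le_abs_self _) hlCK
  have habs2 : -K ≤ Real.log h := by
    have := neg_abs_le (Real.log h); linarith
  constructor
  · -- -δ < B - m
    have : 2*ε*Real.log C ≤ 2*(ε*K) := by nlinarith
    nlinarith
  · -- B - m < δ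
    have : -(2*ε*Real.log h) ≤ 2*(ε*K) := by nlinarith
    nlinarith

private lemma exists_min_on_Ici {F : ℝ → ℝ} (hF : Continuous F) {a β : ℝ} (ha : 0 < a)
    (hgrow : ∀ ξ, 0 ≤ ξ → a * ξ ^ 2 - β ≤ F ξ) :
    ∃ ξ₀, 0 ≤ ξ₀ ∧ ∀ ξ, 0 ≤ ξ → F ξ₀ ≤ F ξ := by
  set R := Real.sqrt (max ((β + F 0)/a) 0) with hR
  have hR0 : 0 ≤ R := Real.sqrt_nonneg _
  obtain ⟨ξ₀, hmem, hminon⟩ := isCompact_Icc.exists_isMinOn (Set.nonempty_Icc.2 hR0)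
    hF.continuousOn
  refine ⟨ξ₀, hmem.1, fun ξ hξ => ?_⟩
  rcases le_or_gt ξ R with hle | hgt
  · exact (isMinOn_iff.1 hminon) ξ ⟨hξ, hle⟩
  · have h0 : F ξ₀ ≤ F 0 := (isMinOn_iff.1 hminon) 0 ⟨le_rfl, hR0⟩
    have hR2 : R ^ 2 = max ((β + F 0)/a) 0 := Real.sq_sqrt (le_max_right _ _)
    have hξ2 : R ^ 2 ≤ ξ ^ 2 := pow_le_pow_left₀ hR0 hgt.le 2
    have h2 : (β + F 0)/a ≤ ξ ^ 2 := le_trans (le_trans (le_max_left _ _) hR2.ge) hξ2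
    have h3 : β + F 0 ≤ a * ξ ^ 2 := by
      rw [div_le_iff₀ ha] at h2; linarith
    have := hgrow ξ hξ
    linarith

private lemma prefactor_tendsto (t : ℝ) (ht : 0 < t) :
    Tendsto (fun ε : ℝ => -2 * ε * Real.log (1 / (2 * Real.sqrt (Real.pi * ε * t))))
      (nhdsWithin 0 (Set.Ioi 0)) (nhds 0) := by
  have h1 : Tendsto (fun ε : ℝ => 2*ε*Real.log 2 + ε * Real.log (Real.pi * t))
      (nhds 0) (nhds 0) := by
    have hc : Continuous fun ε : ℝ => 2*ε*Real.log 2 + ε * Real.log (Real.pi * t) := by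
      continuity
    have := hc.tendsto' 0 0 (by ring)
    exact this
  have h2 : Tendsto (fun ε : ℝ => ε * Real.log ε) (nhds 0) (nhds 0) := by
    have := Real.continuous_mul_log.tendsto' 0 0 (by simp)
    exact this
  have hmain : Tendsto (fun ε : ℝ => 2*ε*Real.log 2 + ε * Real.log (Real.pi * t)
      + ε * Real.log ε) (nhdsWithin 0 (Set.Ioi 0)) (nhds 0) := by
    have := (h1.add h2).mono_left (nhdsWithin_le_nhds (s := Set.Ioi (0:ℝ)))
    simpa using this
  refine Tendsto.congr' ?_ hmain
  filter_upwards [self_mem_nhdsWithin] with ε hε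
  have hε0 : (0:ℝ) < ε := hε
  have hsq : (0:ℝ) < Real.sqrt (Real.pi * ε * t) :=
    Real.sqrt_pos.2 (mul_pos (mul_pos Real.pi_pos hε0) ht)
  rw [one_div, Real.log_inv, Real.log_mul two_ne_zero hsq.ne',
    Real.log_sqrt (mul_pos (mul_pos Real.pi_pos hε0) ht).le,
    show Real.pi * ε * t = (Real.pi * t) * ε by ring,
    Real.log_mul (mul_pos Real.pi_pos ht).ne' hε0.ne']
  ring

/-- **Vanishing-viscosity limit of `J₂^ε` (the `U_L³` component of Theorem 3.1).**
For bounded measurable `u₀`, `x < 0`, `t > 0`, the function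
`ξ ↦ (x+ξ)²/(2t) + ∫₀^{-ξ} u₀` attains its minimum over `[0,∞)` at some `ξ₀`, and
`-2ε log J₂^ε(x,t) → (x+ξ₀)²/(2t) + ∫₀^{-ξ₀} u₀` as `ε → 0⁺`, where
`J₂^ε(x,t) = (1/(2√(πεt))) ∫₀^∞ exp(-(1/2ε)[(x+ξ)²/(2t) + ∫₀^{-ξ} u₀]) dξ`. -/
theorem limit_J2 (u₀ : ℝ → ℝ) (hmeas : Measurable u₀) (M : ℝ) (hbdd : ∀ y : ℝ, |u₀ y| ≤ M)
    (x t : ℝ) (hx : x < 0) (ht : 0 < t) :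
    ∃ ξ₀ ∈ Set.Ici (0 : ℝ),
      (∀ ξ ∈ Set.Ici (0 : ℝ),
        (x + ξ₀) ^ 2 / (2 * t) + (∫ z in (0 : ℝ)..(-ξ₀), u₀ z)
          ≤ (x + ξ) ^ 2 / (2 * t) + ∫ z in (0 : ℝ)..(-ξ), u₀ z) ∧
      Tendsto (fun ε : ℝ =>
          -2 * ε * Real.log ((1 / (2 * Real.sqrt (Real.pi * ε * t))) *
            ∫ ξ in Set.Ioi (0 : ℝ),
              Real.exp (-(1 / (2 * ε)) *
                ((x + ξ) ^ 2 / (2 * t) + ∫ z in (0 : ℝ)..(-ξ), u₀ z))))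
        (nhdsWithin 0 (Set.Ioi 0))
        (nhds ((x + ξ₀) ^ 2 / (2 * t) + ∫ z in (0 : ℝ)..(-ξ₀), u₀ z)) := by
  have hM0 : 0 ≤ M := (abs_nonneg _).trans (hbdd 0)
  have hIInt : ∀ a b : ℝ, IntervalIntegrable u₀ volume a b := by
    intro a b
    constructor <;>
      exact Measure.integrableOn_of_bounded measure_Ioc_lt_top.ne
        hmeas.aestronglyMeasurable
        (ae_of_all _ fun y => by rw [Real.norm_eq_abs]; exact hbdd y)
  have hGcont : Continuous fun ξ : ℝ => ∫ z in (0:ℝ)..(-ξ), u₀ z :=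
    (intervalIntegral.continuous_primitive hIInt 0).comp continuous_neg
  have hFcont : Continuous fun ξ : ℝ => (x + ξ) ^ 2 / (2 * t) + ∫ z in (0:ℝ)..(-ξ), u₀ z :=
    (((continuous_const.add continuous_id).pow 2).div_const _).add hGcont
  have ha : (0:ℝ) < 1/(8*t) := by positivity
  have hgrow : ∀ ξ : ℝ, 0 ≤ ξ → 1/(8*t) * ξ ^ 2 - (x^2/(2*t) + 2*t*M^2)
      ≤ (x + ξ) ^ 2 / (2 * t) + ∫ z in (0:ℝ)..(-ξ), u₀ z := by
    intro ξ hξ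
    have h1 : ‖∫ z in (0:ℝ)..(-ξ), u₀ z‖ ≤ M * |(-ξ) - 0| :=
      intervalIntegral.norm_integral_le_of_norm_le_const
        (fun y _ => by rw [Real.norm_eq_abs]; exact hbdd y)
    rw [Real.norm_eq_abs, sub_zero, abs_neg, abs_of_nonneg hξ] at h1
    have hG1 : -(M*ξ) ≤ ∫ z in (0:ℝ)..(-ξ), u₀ z := by
      have := neg_abs_le (∫ z in (0:ℝ)..(-ξ), u₀ z)
      linarith
    have hkey : ((x+ξ)^2/(2*t) - M*ξ) - (1/(8*t) * ξ ^ 2 - (x^2/(2*t) + 2*t*M^2))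
        = (2*(ξ+2*x)^2 + (ξ-4*t*M)^2) / (8*t) := by
      field_simp
      ring
    have h2 : 0 ≤ (2*(ξ+2*x)^2 + (ξ-4*t*M)^2) / (8*t) := by positivity
    linarith
  obtain ⟨ξ₀, hξ₀0, hξ₀min⟩ := exists_min_on_Ici hFcont ha hgrow
  obtain ⟨hpos, htend⟩ := laplace_main hFcont ha hgrow hξ₀0 hξ₀min
  refine ⟨ξ₀, hξ₀0, fun ξ hξ => hξ₀min ξ hξ, ?_⟩
  have hpre := prefactor_tendsto t ht
  have hsum := hpre.add htend
  rw [zero_add] at hsum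
  refine Tendsto.congr' ?_ hsum
  filter_upwards [self_mem_nhdsWithin] with ε hε
  have hε0 : (0:ℝ) < ε := hε
  have hsq : (0:ℝ) < Real.sqrt (Real.pi * ε * t) :=
    Real.sqrt_pos.2 (mul_pos (mul_pos Real.pi_pos hε0) ht)
  have hP : (1/(2*Real.sqrt (Real.pi*ε*t))) ≠ 0 := by
    have : (0:ℝ) < 1/(2*Real.sqrt (Real.pi*ε*t)) := by positivity
    exact this.ne'
  rw [Real.log_mul hP (hpos ε hε0).ne']
  ring
end

section
/- Let t > 0, let g : ℝ → ℝ be any function, let S ⊆ ℝ, and let x₁ < x be real numbers. Suppose ξ₁ ∈ S is a minimizer of ξ ↦ (x−ξ)²/(2t) + g(ξ) over S, and ξ₂ ∈ S is a minimizer of ξ ↦ (x₁−ξ)²/(2t) + g(ξ) over S. Then ξ₂ ≤ ξ₁. -/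
/-- **Non-intersecting property, ξ-component (Lemma 4.1).** If `ξ₁` minimizes
`ξ ↦ (x-ξ)²/(2t) + g(ξ)` over `S` and `ξ₂` minimizes `ξ ↦ (x₁-ξ)²/(2t) + g(ξ)` over `S`
with `x₁ < x`, then `ξ₂ ≤ ξ₁`. -/
theorem xi_nonintersecting (t : ℝ) (ht : 0 < t) (g : ℝ → ℝ) (S : Set ℝ)
    (x₁ x : ℝ) (hx : x₁ < x) (ξ₁ ξ₂ : ℝ) (hξ₁ : ξ₁ ∈ S) (hξ₂ : ξ₂ ∈ S)
    (hmin₁ : ∀ ξ ∈ S, (x - ξ₁) ^ 2 / (2 * t) + g ξ₁ ≤ (x - ξ) ^ 2 / (2 * t) + g ξ)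
    (hmin₂ : ∀ ξ ∈ S, (x₁ - ξ₂) ^ 2 / (2 * t) + g ξ₂ ≤ (x₁ - ξ) ^ 2 / (2 * t) + g ξ) :
    ξ₂ ≤ ξ₁ := by
  have h1 := hmin₁ ξ₂ hξ₂
  have h2 := hmin₂ ξ₁ hξ₁
  have ht2 : 0 < 2 * t := by linarith
  have key : (x - ξ₁) ^ 2 + (x₁ - ξ₂) ^ 2 ≤ (x - ξ₂) ^ 2 + (x₁ - ξ₁) ^ 2 := by
    have := add_le_add h1 h2
    have h3 : ((x - ξ₁) ^ 2 + (x₁ - ξ₂) ^ 2) / (2 * t) ≤ ((x - ξ₂) ^ 2 + (x₁ - ξ₁) ^ 2) / (2 * t) := by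
      rw [add_div, add_div]; linarith
    exact (div_le_div_iff_of_pos_right ht2).mp h3
  nlinarith [mul_pos (sub_pos.mpr hx) (sub_pos.mpr hx)]
end

section
/- Let t > 0, let g : ℝ → ℝ be any function, and let S ⊆ ℝ be nonempty. Suppose that for every x ∈ ℝ the function ξ ↦ (x−ξ)²/(2t) + g(ξ) attains its minimum over S. Then the set of points x ∈ ℝ at which this minimum is attained at two distinct elements of S is countable. -/
/-- Monotonicity of minimizers: if `ξ` minimizes at `x` and `η` minimizes at `y` with
`x < y`, then `ξ ≤ η`. -/
lemma minimizer_mono (t : ℝ) (ht : 0 < t) (g : ℝ → ℝ) (S : Set ℝ)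
    (x y ξ η : ℝ) (hξS : ξ ∈ S) (hηS : η ∈ S)
    (hξ : ∀ ξ' ∈ S, (x - ξ) ^ 2 / (2 * t) + g ξ ≤ (x - ξ') ^ 2 / (2 * t) + g ξ')
    (hη : ∀ ξ' ∈ S, (y - η) ^ 2 / (2 * t) + g η ≤ (y - ξ') ^ 2 / (2 * t) + g ξ')
    (hxy : x < y) : ξ ≤ η := by
  have h1 := hξ η hηS
  have h2 := hη ξ hξS
  have h2t : (0:ℝ) < 2 * t := by linarith
  rw [div_add' _ _ _ h2t.ne', div_add' _ _ _ h2t.ne', div_le_div_iff_of_pos_right h2t] at h1 h2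
  nlinarith [h1, h2]

/-- **Theorem 4.2 (uniqueness of minimizers a.e.).** If for every `x` the function
`ξ ↦ (x-ξ)²/(2t) + g(ξ)` attains its minimum over a nonempty `S ⊆ ℝ`, then the set of
points `x` at which the minimum is attained at two distinct elements of `S` is countable. -/
theorem nonuniqueness_countable (t : ℝ) (ht : 0 < t) (g : ℝ → ℝ) (S : Set ℝ)
    (hS : S.Nonempty)
    (hattain : ∀ x : ℝ, ∃ ξ ∈ S, ∀ ξ' ∈ S,
      (x - ξ) ^ 2 / (2 * t) + g ξ ≤ (x - ξ') ^ 2 / (2 * t) + g ξ') :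
    Set.Countable {x : ℝ | ∃ ξ₁ ∈ S, ∃ ξ₂ ∈ S, ξ₁ ≠ ξ₂ ∧
      (∀ ξ' ∈ S, (x - ξ₁) ^ 2 / (2 * t) + g ξ₁ ≤ (x - ξ') ^ 2 / (2 * t) + g ξ') ∧
      (∀ ξ' ∈ S, (x - ξ₂) ^ 2 / (2 * t) + g ξ₂ ≤ (x - ξ') ^ 2 / (2 * t) + g ξ')} := by
  set N := {x : ℝ | ∃ ξ₁ ∈ S, ∃ ξ₂ ∈ S, ξ₁ ≠ ξ₂ ∧
      (∀ ξ' ∈ S, (x - ξ₁) ^ 2 / (2 * t) + g ξ₁ ≤ (x - ξ') ^ 2 / (2 * t) + g ξ') ∧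
      (∀ ξ' ∈ S, (x - ξ₂) ^ 2 / (2 * t) + g ξ₂ ≤ (x - ξ') ^ 2 / (2 * t) + g ξ')} with hN
  -- For each x ∈ N, pick a rational strictly between two distinct minimizers.
  have key : ∀ x : N, ∃ q : ℚ, ∃ a ∈ S, ∃ b ∈ S,
      a < (q:ℝ) ∧ (q:ℝ) < b ∧
      (∀ ξ' ∈ S, ((x:ℝ) - a) ^ 2 / (2 * t) + g a ≤ ((x:ℝ) - ξ') ^ 2 / (2 * t) + g ξ') ∧
      (∀ ξ' ∈ S, ((x:ℝ) - b) ^ 2 / (2 * t) + g b ≤ ((x:ℝ) - ξ') ^ 2 / (2 * t) + g ξ') := by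
    rintro ⟨x, ξ₁, hξ₁S, ξ₂, hξ₂S, hne, h1, h2⟩
    rcases hne.lt_or_gt with hlt | hlt
    · obtain ⟨q, hq1, hq2⟩ := exists_rat_btwn hlt
      exact ⟨q, ξ₁, hξ₁S, ξ₂, hξ₂S, hq1, hq2, h1, h2⟩
    · obtain ⟨q, hq1, hq2⟩ := exists_rat_btwn hlt
      exact ⟨q, ξ₂, hξ₂S, ξ₁, hξ₁S, hq1, hq2, h2, h1⟩
  choose f a haS b hbS haq hqb hamin hbmin using key
  have hinj : Function.Injective f := by
    intro x y hfxy
    by_contra hne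
    have hne' : (x:ℝ) ≠ (y:ℝ) := fun h => hne (Subtype.ext h)
    wlog hxy : (x:ℝ) < (y:ℝ) generalizing x y
    · exact this (y := x) (x := y) hfxy.symm (Ne.symm hne) hne'.symm (hne'.lt_or_gt.resolve_left hxy)
    have hba : b x ≤ a y :=
      minimizer_mono t ht g S x y (b x) (a y) (hbS x) (haS y) (hbmin x) (hamin y) hxy
    have h1 : ((f x : ℚ) : ℝ) < b x := hqb x
    have h2 : (a y : ℝ) < ((f y : ℚ) : ℝ) := haq y
    rw [hfxy] at h1
    linarith
  rw [← Set.countable_coe_iff]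
  exact hinj.countable
end

section
/- Let τ₁, t̄, t, x, x̄, y₁ be real numbers with 0 ≤ τ₁ < t̄ < t, and suppose (x̄ − y₁)·t = (x − y₁)·t̄ (i.e. the point (x̄, t̄) lies on the line through (y₁, 0) and (x, t)). Then x²/(t − τ₁) ≤ ((x − y₁)/t)² · (t − t̄) + x̄²/(t̄ − τ₁). -/
/-- **Key estimate in Step 2 of Lemma 4.3 (inequalities (c1)–(c2)).** If
`0 ≤ τ₁ < t̄ < t` and `(x̄, t̄)` lies on the line through `(y₁, 0)` and `(x, t)`
(i.e. `(x̄ - y₁) t = (x - y₁) t̄`), then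
`x²/(t - τ₁) ≤ ((x - y₁)/t)² (t - t̄) + x̄²/(t̄ - τ₁)`. -/
theorem convexity_line_estimate (τ₁ tb t x xb y₁ : ℝ)
    (h0 : 0 ≤ τ₁) (h1 : τ₁ < tb) (h2 : tb < t)
    (hline : (xb - y₁) * t = (x - y₁) * tb) :
    x ^ 2 / (t - τ₁) ≤ ((x - y₁) / t) ^ 2 * (t - tb) + xb ^ 2 / (tb - τ₁) := by
  have ht : (0:ℝ) < t := lt_of_le_of_lt h0 (h1.trans h2)
  have h3 : 0 < tb - τ₁ := by linarith
  have h4 : 0 < t - tb := by linarith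
  have h5 : 0 < t - τ₁ := by linarith
  have key : (x - xb) * t = (x - y₁) * (t - tb) := by ring_nf; linarith [hline]
  have engel : (x) ^ 2 / (t - τ₁) ≤ (x - xb) ^ 2 / (t - tb) + xb ^ 2 / (tb - τ₁) := by
    rw [div_add_div _ _ h4.ne' h3.ne', div_le_div_iff₀ h5 (by positivity)]
    nlinarith [sq_nonneg ((x - xb) * (tb - τ₁) - xb * (t - tb)), mul_pos h4 h3]
  have heq : (x - xb) ^ 2 / (t - tb) = ((x - y₁) / t) ^ 2 * (t - tb) := by
    rw [div_pow, div_mul_eq_mul_div, eq_div_iff (by positivity), div_mul_eq_mul_div,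
      div_eq_iff h4.ne']
    have key2 : ((x - xb) * t) ^ 2 = ((x - y₁) * (t - tb)) ^ 2 := by rw [key]
    nlinarith [key2]
  linarith [engel, heq.le]
end
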